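/- In a distributive nearlattice, m^{n+1}(a₀,…,a_{n+1},b) ≤ m^n(a₀,…,a_n,b) for all elements a₀,…,a_{n+1},b. -/

import Mathlib

variable {A : Type*}

/-- Induced join: `x ∨ y := m x x y`. -/
def sup (m : A → A → A → A) (x y : A) : A := m x x y

/-- Induced order: `x ≤ y` iff `m x x y = y`. -/
def le (m : A → A → A → A) (x y : A) : Prop := m x x y = y

/-- Nearlattice identities (P1) and (P2). -/
def IsNearlattice (m : A → A → A → A) : Prop :=
  (∀ x y, m x y x = x) ∧
  (∀ x y z u w, m (m x y z) (m y (m u x z) z) w = m w w (m y (m x u z) z))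

/-- Identity (P3). -/
def P3 (m : A → A → A → A) : Prop :=
  ∀ x y z w, m x (m y y z) w = m (m x y w) (m x y w) (m x z w)

/-- Identity (P4). -/
def P4 (m : A → A → A → A) : Prop :=
  ∀ x y z w, m x x (m y z w) = m (m x x y) (m x x z) w

/-- Distributive nearlattice: (P1)-(P3). -/
def IsDN (m : A → A → A → A) : Prop := IsNearlattice m ∧ P3 m

/-- `z` is the meet (greatest lower bound) of `x` and `y` in `A`. -/
def IsMeet (m : A → A → A → A) (x y z : A) : Prop :=
  le m z x ∧ le m z y ∧ ∀ w, le m w x → le m w y → le m w z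

/-- `z` is the meet of `x` and `y` computed inside the principal upset `[a)`. -/
def IsMeetIn (m : A → A → A → A) (a x y z : A) : Prop :=
  le m a z ∧ le m z x ∧ le m z y ∧
    ∀ w, le m a w → le m w x → le m w y → le m w z

/-- `a` is the greatest lower bound of the set `s`. -/
def IsInfSet (m : A → A → A → A) (s : Set A) (a : A) : Prop :=
  (∀ b ∈ s, le m a b) ∧ ∀ c, (∀ b ∈ s, le m c b) → le m c a

/-- A filter of a nearlattice: a nonempty up-set closed under existing binary meets. -/
def IsFilter (m : A → A → A → A) (F : Set A) : Prop :=
  F.Nonempty ∧ (∀ x y, x ∈ F → le m x y → y ∈ F) ∧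
    (∀ x y z, x ∈ F → y ∈ F → IsMeet m x y z → z ∈ F)

/-- `mN m [a₀,…,aₙ] b = mⁿ(a₀,…,aₙ,b)`, with `mN m [] b = b`. -/
def mN (m : A → A → A → A) : List A → A → A
  | [], b => b
  | a :: t, b => t.foldl (fun acc x => m acc x b) (m a a b)


section NearlatticeAux

variable (m : A → A → A → A)

private lemma nl_c1 (h1 : ∀ x y, m x y x = x)
    (h2 : ∀ x y z u w, m (m x y z) (m y (m u x z) z) w = m w w (m y (m x u z) z)) :
    ∀ x w, m x x w = m w w x := by
  intro x w
  have a := h2 x x x x w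
  have b := h1 x x
  have c := h1 x (m x x x)
  grind

private lemma nl_i1 (h1 : ∀ x y, m x y x = x)
    (h2 : ∀ x y z u w, m (m x y z) (m y (m u x z) z) w = m w w (m y (m x u z) z)) :
    ∀ x y, m y x x = x := by
  intro x y
  have A := h2 y x x x (m y x x)
  have B := h2 x y x x x
  have C := nl_c1 m h1 h2 x (m y x x)
  have d1 := h1 x y
  have d2 := h1 x x
  have d3 := h1 x (m x y x)
  have d4 := h1 x (m y x x)
  have d5 := h1 (m y x x) x
  grind

private lemma nl_i6 (h1 : ∀ x y, m x y x = x)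
    (h2 : ∀ x y z u w, m (m x y z) (m y (m u x z) z) w = m w w (m y (m x u z) z)) :
    ∀ x y z, m z z (m x y z) = m x y z := by
  intro x y z
  have A := h2 x y z z (m x y z)
  have d1 := h1 z x
  have d2 := nl_i1 m h1 h2 z y
  have d3 := h1 (m x y z) z
  have d4 := nl_i1 m h1 h2 z x
  have d5 := nl_c1 m h1 h2 (m x y z) z
  grind

private lemma nl_c4 (h1 : ∀ x y, m x y x = x)
    (h2 : ∀ x y z u w, m (m x y z) (m y (m u x z) z) w = m w w (m y (m x u z) z)) :
    ∀ x y z w, m (m x y z) z w = m w w z := by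
  intro x y z w
  have A := h2 x y z z w
  have d1 := h1 z x
  have d2 := nl_i1 m h1 h2 z y
  have d3 := nl_i1 m h1 h2 z x
  grind

private lemma nl_comm (h1 : ∀ x y, m x y x = x)
    (h2 : ∀ x y z u w, m (m x y z) (m y (m u x z) z) w = m w w (m y (m x u z) z))
    (h3 : ∀ x y z w, m x (m y y z) w = m (m x y w) (m x y w) (m x z w)) :
    ∀ x y z, m x y z = m y x z := by
  intro x y z
  have T1 := h3 y x z z
  have T2 := h3 x y z z
  have e1 := nl_i1 m h1 h2 z y
  have e2 := nl_i1 m h1 h2 z x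
  have e3 := nl_c1 m h1 h2 (m y x z) z
  have e4 := nl_c1 m h1 h2 (m x y z) z
  have e5 := nl_i6 m h1 h2 y x z
  have e6 := nl_i6 m h1 h2 x y z
  have S1 := h2 x y z x (m x y z)
  have S2 := h2 y x z y (m y x z)
  have f1 := h1 (m x y z) (m y (m x x z) z)
  have f2 := h1 (m y x z) (m x (m y y z) z)
  have g := nl_c1 m h1 h2 (m x y z) (m y x z)
  grind

private lemma nl_i5 (h1 : ∀ x y, m x y x = x)
    (h2 : ∀ x y z u w, m (m x y z) (m y (m u x z) z) w = m w w (m y (m x u z) z))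
    (h3 : ∀ x y z w, m x (m y y z) w = m (m x y w) (m x y w) (m x z w)) :
    ∀ x y w, m (m x y w) (m x y w) (m x x w) = m x x w := by
  intro x y w
  have P := h3 x y x w
  have Q := nl_comm m h1 h2 h3 x (m y y x) w
  have R := nl_c4 m h1 h2 y y x w
  have S := nl_c1 m h1 h2 x w
  grind

private lemma nl_leStep (h1 : ∀ x y, m x y x = x)
    (h2 : ∀ x y z u w, m (m x y z) (m y (m u x z) z) w = m w w (m y (m x u z) z))
    (h3 : ∀ x y z w, m x (m y y z) w = m (m x y w) (m x y w) (m x z w)) :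
    ∀ p c b, m b b p = p → m (m p c b) (m p c b) p = p := by
  intro p c b hb
  have A := nl_i5 m h1 h2 h3 p c b
  have B := nl_c1 m h1 h2 p b
  grind

private lemma nl_fold (hi6 : ∀ x y z, m z z (m x y z) = m x y z) :
    ∀ (t : List A) (b acc : A), m b b acc = acc →
      m b b (t.foldl (fun acc x => m acc x b) acc)
        = t.foldl (fun acc x => m acc x b) acc := by
  intro t
  induction t with
  | nil => intro b acc h; simpa using h
  | cons x t ih => intro b acc h; simpa using ih b (m acc x b) (hi6 acc x b)

end NearlatticeAux

/-- In a distributive nearlattice, `mⁿ⁺¹(a₀,…,aₙ₊₁,b) ≤ mⁿ(a₀,…,aₙ,b)`. -/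
theorem stmt8 (m : A → A → A → A) (h : IsDN m) (l : List A) (hl : l ≠ [])
    (c b : A) :
    le m (mN m (l ++ [c]) b) (mN m l b) := by
  obtain ⟨⟨h1, h2⟩, h3⟩ := h
  cases l with
  | nil => exact absurd rfl hl
  | cons a t =>
    have happ : mN m ((a :: t) ++ [c]) b = m (mN m (a :: t) b) c b := by
      simp [mN, List.foldl_append]
    have hb : m b b (mN m (a :: t) b) = mN m (a :: t) b :=
      nl_fold m (nl_i6 m h1 h2) t b (m a a b) (nl_i6 m h1 h2 a a b)
    show m (mN m ((a :: t) ++ [c]) b) (mN m ((a :: t) ++ [c]) b) (mN m (a :: t) b)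
        = mN m (a :: t) b
    rw [happ]
    exact nl_leStep m h1 h2 h3 (mN m (a :: t) b) c b hb
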